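/- Let d ∈ ℕ with d ≥ 1, let Δ > 0 and ρ > 0, and set σ² = Δ²/(2ρ). For a ∈ ℝ^d let P_a(x) = ∏_{i=1}^d φ_{a_i,σ}(x_i) denote the density of the product Gaussian measure ⊗_i N(a_i, σ²) on ℝ^d. Then for all a, b ∈ ℝ^d with ‖a − b‖₂ ≤ Δ and every real α > 1, ∫_{ℝ^d} P_a(x)^α · P_b(x)^{1−α} dx ≤ exp(α·(α − 1)·ρ). Equivalently, the α-Rényi divergence between the two product Gaussians is at most α·ρ for all α > 1, which is the ρ-zCDP guarantee of the Gaussian mechanism with ℓ2-sensitivity Δ and variance Δ²/(2ρ). -/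

import Mathlib

open MeasureTheory

/-- The density of the Gaussian measure `N(m, σ²)` with respect to Lebesgue measure. -/
noncomputable def gaussDensity (m σ x : ℝ) : ℝ :=
  1 / (σ * Real.sqrt (2 * Real.pi)) * Real.exp (-(x - m) ^ 2 / (2 * σ ^ 2))

lemma gaussDensity_pos {m σ x : ℝ} (hσ : 0 < σ) : 0 < gaussDensity m σ x := by
  unfold gaussDensity
  have : 0 < Real.sqrt (2 * Real.pi) := Real.sqrt_pos.2 (by positivity)
  positivity

lemma gaussDensity_eq (m : ℝ) {σ : ℝ} (hσ : 0 < σ) (x : ℝ) :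
    gaussDensity m σ x = ProbabilityTheory.gaussianPDFReal m ⟨σ ^ 2, sq_nonneg σ⟩ x := by
  unfold gaussDensity ProbabilityTheory.gaussianPDFReal
  have h2 : Real.sqrt (2 * Real.pi * σ ^ 2) = σ * Real.sqrt (2 * Real.pi) := by
    rw [mul_comm (2 * Real.pi) (σ ^ 2), Real.sqrt_mul (sq_nonneg σ),
      Real.sqrt_sq hσ.le]
  show _ = (Real.sqrt (2 * Real.pi * σ ^ 2))⁻¹ * Real.exp (-(x - m) ^ 2 / (2 * σ ^ 2))
  rw [h2]
  simp [h2, one_div]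

lemma integral_gaussDensity {σ : ℝ} (hσ : 0 < σ) (m : ℝ) :
    ∫ x, gaussDensity m σ x = 1 := by
  have hv : (⟨σ ^ 2, sq_nonneg σ⟩ : NNReal) ≠ 0 := by
    exact fun h => (pow_ne_zero 2 hσ.ne') (congrArg NNReal.toReal h)
  simp_rw [gaussDensity_eq m hσ]
  exact ProbabilityTheory.integral_gaussianPDFReal_eq_one m hv

lemma renyi_1d {σ : ℝ} (hσ : 0 < σ) (a b α : ℝ) :
    ∫ x, gaussDensity a σ x ^ α * gaussDensity b σ x ^ (1 - α)
      = Real.exp (α * (α - 1) * (a - b) ^ 2 / (2 * σ ^ 2)) := by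
  have hσ2 : (0:ℝ) < 2 * σ ^ 2 := by positivity
  set C : ℝ := 1 / (σ * Real.sqrt (2 * Real.pi)) with hC
  have hCpos : 0 < C := by
    have : 0 < Real.sqrt (2 * Real.pi) := Real.sqrt_pos.2 (by positivity)
    positivity
  set m : ℝ := α * a + (1 - α) * b with hm
  set K : ℝ := α * (α - 1) * (a - b) ^ 2 / (2 * σ ^ 2) with hK
  have key : ∀ x : ℝ, gaussDensity a σ x ^ α * gaussDensity b σ x ^ (1 - α)
      = Real.exp K * gaussDensity m σ x := by
    intro x
    unfold gaussDensity
    rw [← hC]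
    rw [Real.mul_rpow hCpos.le (Real.exp_nonneg _),
        Real.mul_rpow hCpos.le (Real.exp_nonneg _),
        ← Real.exp_mul, ← Real.exp_mul]
    have hCC : C ^ α * C ^ (1 - α) = C := by
      rw [← Real.rpow_add hCpos]; simp
    calc C ^ α * Real.exp (-(x - a) ^ 2 / (2 * σ ^ 2) * α) *
          (C ^ (1 - α) * Real.exp (-(x - b) ^ 2 / (2 * σ ^ 2) * (1 - α)))
        = (C ^ α * C ^ (1 - α)) *
            Real.exp (-(x - a) ^ 2 / (2 * σ ^ 2) * α + -(x - b) ^ 2 / (2 * σ ^ 2) * (1 - α)) := by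
          rw [Real.exp_add]; ring
      _ = C * Real.exp (K + -(x - m) ^ 2 / (2 * σ ^ 2)) := by
          rw [hCC]
          congr 1
          rw [hK, hm]
          field_simp
          ring
      _ = Real.exp K * (C * Real.exp (-(x - m) ^ 2 / (2 * σ ^ 2))) := by
          rw [Real.exp_add]; ring
  simp_rw [key]
  rw [integral_const_mul, integral_gaussDensity hσ m, mul_one]

/-- ρ-zCDP guarantee of the Gaussian mechanism with ℓ2-sensitivity `Δ` and variance
`σ² = Δ²/(2ρ)`: for `‖a − b‖₂ ≤ Δ` and every `α > 1`,
`∫ P_a^α · P_b^{1−α} ≤ exp(α(α−1)ρ)`, i.e. the α-Rényi divergence between the two product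
Gaussians is at most `α·ρ`. -/
theorem zCDP_gaussian_mechanism (d : ℕ) (hd : 1 ≤ d) (Δ ρ : ℝ) (hΔ : 0 < Δ) (hρ : 0 < ρ)
    (a b : Fin d → ℝ) (hsens : Real.sqrt (∑ i, (a i - b i) ^ 2) ≤ Δ)
    (α : ℝ) (hα : 1 < α) :
    ∫ x : Fin d → ℝ,
        (∏ i, gaussDensity (a i) (Real.sqrt (Δ ^ 2 / (2 * ρ))) (x i)) ^ α *
          (∏ i, gaussDensity (b i) (Real.sqrt (Δ ^ 2 / (2 * ρ))) (x i)) ^ (1 - α) ≤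
      Real.exp (α * (α - 1) * ρ) := by
  set σ : ℝ := Real.sqrt (Δ ^ 2 / (2 * ρ)) with hσdef
  have hσ : 0 < σ := Real.sqrt_pos.2 (by positivity)
  have hσ2 : σ ^ 2 = Δ ^ 2 / (2 * ρ) := Real.sq_sqrt (by positivity)
  have hpt : ∀ x : Fin d → ℝ,
      (∏ i, gaussDensity (a i) σ (x i)) ^ α * (∏ i, gaussDensity (b i) σ (x i)) ^ (1 - α)
        = ∏ i, gaussDensity (a i) σ (x i) ^ α * gaussDensity (b i) σ (x i) ^ (1 - α) := by
    intro x
    rw [← Real.finset_prod_rpow _ _ (fun i _ => (gaussDensity_pos (x := x i) hσ).le) α,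
        ← Real.finset_prod_rpow _ _ (fun i _ => (gaussDensity_pos (x := x i) hσ).le) (1 - α),
        ← Finset.prod_mul_distrib]
  simp_rw [hpt]
  rw [MeasureTheory.integral_fintype_prod_volume_eq_prod (𝕜 := ℝ) (ι := Fin d)
    (fun i t => gaussDensity (a i) σ t ^ α * gaussDensity (b i) σ t ^ (1 - α))]
  simp_rw [renyi_1d hσ]
  rw [← Real.exp_sum]
  apply Real.exp_le_exp.2
  have hS : ∑ i, (a i - b i) ^ 2 ≤ Δ ^ 2 := by
    have := Real.sqrt_le_sqrt (Real.sq_sqrt (Finset.sum_nonneg fun i _ => sq_nonneg _) ▸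
      le_refl (∑ i, (a i - b i) ^ 2))
    nlinarith [Real.sq_sqrt (Finset.sum_nonneg (fun i (_ : i ∈ Finset.univ) => sq_nonneg (a i - b i))),
      Real.sqrt_nonneg (∑ i, (a i - b i) ^ 2)]
  have : ∑ i, α * (α - 1) * (a i - b i) ^ 2 / (2 * σ ^ 2)
      = α * (α - 1) * (∑ i, (a i - b i) ^ 2) / (2 * σ ^ 2) := by
    rw [Finset.mul_sum, Finset.sum_div]
  rw [this, hσ2]
  have hαα : 0 < α * (α - 1) := by nlinarith
  rw [div_le_iff₀ (by positivity)]
  calc α * (α - 1) * (∑ i, (a i - b i) ^ 2) ≤ α * (α - 1) * Δ ^ 2 := by nlinarith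
    _ = α * (α - 1) * ρ * (2 * (Δ ^ 2 / (2 * ρ))) := by field_simp
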